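/- Let (X, ↪, P) be a primal-proximity space. Then the operator cl* defined by cl*(A) := A ∪ A^↪, where A^↪ := {x ∈ X : {x} ↪ A}, is a Kuratowski closure operator: (1) cl*(∅) = ∅; (2) A ⊆ cl*(A) for every A ⊆ X; (3) cl*(A ∪ B) = cl*(A) ∪ cl*(B) for all A, B ⊆ X; (4) cl*(cl*(A)) = cl*(A) for every A ⊆ X. -/
import Mathlib


open Set

/-- A collection `P` of subsets of `X` is a *primal* on `X`. -/
def IsPrimalOn {X : Type*} (P : Set (Set X)) : Prop :=
  (Set.univ : Set X) ∉ P ∧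
  (∀ A B : Set X, A ∈ P → B ⊆ A → B ∈ P) ∧
  (∀ A B : Set X, A ∩ B ∈ P → A ∈ P ∨ B ∈ P)

/-- A binary relation `r` on the power set of `X` is a *primal-proximity* with
respect to a primal `P` on `X`. -/
def IsPrimalProximity {X : Type*} (P : Set (Set X)) (r : Set X → Set X → Prop) : Prop :=
  (∀ A B : Set X, r A B → r B A) ∧
  (∀ A B C : Set X, r A (B ∪ C) ↔ (r A B ∨ r A C)) ∧
  (∀ A : Set X, Aᶜ ∉ P → ∀ B : Set X, ¬ r A B) ∧
  (∀ A B : Set X, (A ∩ B)ᶜ ∈ P → r A B) ∧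
  (∀ A B : Set X, ¬ r A B →
    ∃ C D : Set X, ¬ r A Cᶜ ∧ ¬ r Dᶜ B ∧ (C ∩ D)ᶜ ∉ P)

/-- The point-primal proximity of `A`: `A^↪ = {x | {x} ↪ A}`. -/
def ppp {X : Type*} (r : Set X → Set X → Prop) (A : Set X) : Set X :=
  {x : X | r {x} A}

theorem stmt_17 {X : Type*} [Nonempty X] (P : Set (Set X)) (r : Set X → Set X → Prop)
    (hP : IsPrimalOn P) (hr : IsPrimalProximity P r) :
    ((∅ : Set X) ∪ ppp r (∅ : Set X) = ∅) ∧
    (∀ A : Set X, A ⊆ A ∪ ppp r A) ∧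
    (∀ A B : Set X, (A ∪ B) ∪ ppp r (A ∪ B) = (A ∪ ppp r A) ∪ (B ∪ ppp r B)) ∧
    (∀ A : Set X, (A ∪ ppp r A) ∪ ppp r (A ∪ ppp r A) = A ∪ ppp r A) := by
  obtain ⟨hsym, hadd, h3, h4, h5⟩ := hr
  -- monotonicity in second argument
  have hmono : ∀ A B B' : Set X, B ⊆ B' → r A B → r A B' := by
    intro A B B' hBB hAB
    have : B' = B ∪ B' := (union_eq_self_of_subset_left hBB).symm
    rw [this, hadd]; exact Or.inl hAB
  have hempty : ∀ B : Set X, ¬ r (∅ : Set X) B := by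
    intro B
    apply h3
    simp [hP.1]
  refine ⟨?_, ?_, ?_, ?_⟩
  · ext x
    simp only [mem_union, mem_empty_iff_false, false_or, ppp, mem_setOf_eq]
    exact ⟨fun hx => hempty {x} (hsym _ _ hx), False.elim⟩
  · intro A; exact subset_union_left
  · intro A B
    have : ppp r (A ∪ B) = ppp r A ∪ ppp r B := by
      ext x; simp only [ppp, mem_setOf_eq, mem_union, hadd]
    rw [this]; ext x; simp only [mem_union]; tauto
  · intro A
    apply union_eq_self_of_subset_right
    intro x hx
    simp only [ppp, mem_setOf_eq] at hx
    rw [hadd] at hx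
    rcases hx with h | h
    · exact Or.inr h
    · -- r {x} (ppp r A) → r {x} A
      right
      by_contra hxa
      obtain ⟨C, D, hC, hD, hCD⟩ := h5 {x} A hxa
      have hppD : ppp r A ⊆ D := by
        intro y hy
        by_contra hyD
        exact hD (hsym _ _ (hmono A {y} Dᶜ (singleton_subset_iff.2 hyD) (hsym _ _ hy)))
      have hDsub : D ⊆ (C ∩ D) ∪ Cᶜ := by
        intro z hz
        by_cases hzc : z ∈ C
        · exact Or.inl ⟨hzc, hz⟩
        · exact Or.inr hzc
      have : r {x} ((C ∩ D) ∪ Cᶜ) :=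
        hmono _ _ _ (hppD.trans hDsub) h
      rw [hadd] at this
      rcases this with h1 | h1
      · exact h3 (C ∩ D) hCD {x} (hsym _ _ h1)
      · exact hC h1
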